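/- arXiv:1010.0286 — 2 statements merged into one kernel-verified Lean document; each statement's English description precedes it below -/
import Mathlib

section
/- Let ζ = exp(2πi/7) and let i, j be integers. If ζ^i + ζ^j + ζ^{-i} + ζ^{-j} is an integer, then ζ^i = 1 and ζ^j = 1 (i.e., 7 divides both i and j). -/
open Complex Polynomial Finset

lemma allzero6 (ζ : ℂ) (hprim : IsPrimitiveRoot ζ 7)
    (c0 c1 c2 c3 c4 c5 : ℚ)
    (h : (c0:ℂ) + c1*ζ + c2*ζ^2 + c3*ζ^3 + c4*ζ^4 + c5*ζ^5 = 0) :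
    c0 = 0 ∧ c1 = 0 ∧ c2 = 0 ∧ c3 = 0 ∧ c4 = 0 ∧ c5 = 0 := by
  set p : ℚ[X] := C c0 + C c1 * X + C c2 * X^2 + C c3 * X^3 + C c4 * X^4 + C c5 * X^5 with hp
  have hroot : aeval ζ p = 0 := by
    simp only [hp, map_add, map_mul, map_pow, aeval_C, aeval_X]
    convert h using 2 <;> simp only [eq_ratCast]
  have hp0 : p = 0 := by
    by_contra hne
    have hd : p.degree ≤ 5 := by rw [hp]; compute_degree
    have hle := minpoly.degree_le_of_ne_zero ℚ ζ hne hroot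
    rw [← Polynomial.cyclotomic_eq_minpoly_rat hprim (by norm_num)] at hle
    rw [Polynomial.degree_cyclotomic] at hle
    have h7 : Nat.totient 7 = 6 := by decide
    rw [h7] at hle
    have : (6 : WithBot ℕ) ≤ 5 := le_trans hle hd
    norm_num at this
  have hc : ∀ k, p.coeff k = 0 := by rw [hp0]; simp
  refine ⟨?_, ?_, ?_, ?_, ?_, ?_⟩
  · simpa [hp, coeff_C, coeff_X_pow] using hc 0
  · simpa [hp, coeff_C, coeff_X_pow] using hc 1
  · simpa [hp, coeff_C, coeff_X_pow] using hc 2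
  · simpa [hp, coeff_C, coeff_X_pow] using hc 3
  · simpa [hp, coeff_C, coeff_X_pow] using hc 4
  · simpa [hp, coeff_C, coeff_X_pow] using hc 5

/-- If `ζ = exp(2πi/7)` and `ζ^i + ζ^j + ζ^{-i} + ζ^{-j}` is an integer, then
`ζ^i = 1` and `ζ^j = 1`. -/
theorem seventh_root_sum_integer (i j : ℤ)
    (ζ : ℂ) (hζ : ζ = Complex.exp (2 * Real.pi * Complex.I / 7))
    (h : ∃ n : ℤ, ζ ^ i + ζ ^ j + ζ ^ (-i) + ζ ^ (-j) = (n : ℂ)) :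
    ζ ^ i = 1 ∧ ζ ^ j = 1 := by
  obtain ⟨n, h⟩ := h
  have hprim : IsPrimitiveRoot ζ 7 := by
    rw [hζ]
    convert Complex.isPrimitiveRoot_exp 7 (by norm_num) using 3 <;> norm_num
  have hne : ζ ≠ 0 := hprim.ne_zero (by norm_num)
  have h7 : ζ ^ (7 : ℕ) = 1 := hprim.pow_eq_one
  have h7z : ζ ^ (7 : ℤ) = 1 := by exact_mod_cast h7
  have hz : ∀ m : ℤ, ζ ^ m = ζ ^ (m % 7).toNat := by
    intro m
    have e : 7 * (m / 7) + m % 7 = m := by omega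
    calc ζ ^ m = ζ ^ (7 * (m / 7) + m % 7) := by rw [e]
      _ = (ζ ^ (7:ℤ)) ^ (m / 7) * ζ ^ (m % 7) := by rw [zpow_add₀ hne, zpow_mul]
      _ = ζ ^ (m % 7) := by rw [h7z, one_zpow, one_mul]
      _ = ζ ^ ((m % 7).toNat : ℤ) := by rw [Int.toNat_of_nonneg (by omega)]
      _ = ζ ^ (m % 7).toNat := zpow_natCast ζ _
  set r : ℕ := (i % 7).toNat with hrdef
  set s : ℕ := (j % 7).toNat with hsdef
  set r' : ℕ := ((-i) % 7).toNat with hr'def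
  set s' : ℕ := ((-j) % 7).toNat with hs'def
  have hr : r < 7 := by omega
  have hs : s < 7 := by omega
  have hr' : r' < 7 := by omega
  have hs' : s' < 7 := by omega
  rw [hz i, hz j, hz (-i), hz (-j)] at h
  -- h : ζ ^ r + ζ ^ s + ζ ^ r' + ζ ^ s' = n
  set d : ℕ → ℚ := fun k => (if r = k then 1 else 0) + (if r' = k then 1 else 0)
      + (if s = k then 1 else 0) + (if s' = k then 1 else 0)
      - (if k = 0 then (n:ℚ) else 0) with hd
  have H2 : ∑ k ∈ range 7, (d k : ℂ) * ζ ^ k = 0 := by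
    have e1 : ∑ k ∈ range 7, (d k : ℂ) * ζ ^ k
        = (∑ k ∈ range 7, if r = k then ζ ^ k else 0)
        + (∑ k ∈ range 7, if r' = k then ζ ^ k else 0)
        + (∑ k ∈ range 7, if s = k then ζ ^ k else 0)
        + (∑ k ∈ range 7, if s' = k then ζ ^ k else 0)
        - (∑ k ∈ range 7, if k = 0 then (n:ℂ) * ζ ^ k else 0) := by
      rw [← Finset.sum_add_distrib, ← Finset.sum_add_distrib, ← Finset.sum_add_distrib,
        ← Finset.sum_sub_distrib]
      refine Finset.sum_congr rfl fun k _ => ?_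
      simp only [hd]
      push_cast [apply_ite (fun q : ℚ => (q : ℂ))]
      split_ifs <;> ring
    rw [e1, Finset.sum_ite_eq, Finset.sum_ite_eq, Finset.sum_ite_eq, Finset.sum_ite_eq,
      Finset.sum_ite_eq']
    simp only [Finset.mem_range, hr, hs, hr', hs', if_pos, Nat.zero_lt_succ, pow_zero, mul_one]
    linear_combination h
  have hsum : ∑ k ∈ range 7, ζ ^ k = 0 := hprim.geom_sum_eq_zero (by norm_num)
  simp only [Finset.sum_range_succ, Finset.sum_range_zero, zero_add] at H2 hsum
  obtain ⟨e0, e1, e2, e3, e4, e5⟩ := allzero6 ζ hprim (d 0 - d 6) (d 1 - d 6) (d 2 - d 6)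
    (d 3 - d 6) (d 4 - d 6) (d 5 - d 6) (by push_cast; linear_combination H2 - (d 6 : ℂ) * hsum)
  have hAll : ∀ k, k < 7 → d k = d 6 := by
    intro k hk
    interval_cases k <;> linarith
  have pig : ∀ a b c e : Fin 7, ∃ k : Fin 7,
      k ≠ 0 ∧ k ≠ a ∧ k ≠ b ∧ k ≠ c ∧ k ≠ e := by decide
  obtain ⟨kf, fk0, fkr, fkr', fks, fks'⟩ := pig ⟨r, hr⟩ ⟨r', hr'⟩ ⟨s, hs⟩ ⟨s', hs'⟩
  set k : ℕ := kf.val with hkdef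
  have hk7 : k < 7 := kf.isLt
  have hk0 : k ≠ 0 := fun hh => fk0 (Fin.ext hh)
  have hkr : k ≠ r := fun hh => fkr (Fin.ext hh)
  have hkr' : k ≠ r' := fun hh => fkr' (Fin.ext hh)
  have hks : k ≠ s := fun hh => fks (Fin.ext hh)
  have hks' : k ≠ s' := fun hh => fks' (Fin.ext hh)
  have hdk : d k = 0 := by
    simp only [hd]
    rw [if_neg (Ne.symm hkr), if_neg (Ne.symm hkr'), if_neg (Ne.symm hks),
      if_neg (Ne.symm hks'), if_neg hk0]
    norm_num
  have ht0 : d 6 = 0 := by rw [← hAll k hk7]; exact hdk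
  have hge : ∀ m, m < 7 → m ≠ 0 → (r = m ∨ r' = m ∨ s = m ∨ s' = m) → False := by
    intro m hm7 hm0 hcase
    have h1 : 1 ≤ d m := by
      simp only [hd]
      rw [if_neg hm0]
      rcases hcase with h' | h' | h' | h' <;> rw [if_pos h'] <;> split_ifs <;> norm_num
    have := hAll m hm7
    linarith
  have hr0 : r = 0 := by
    by_contra h0
    exact hge r hr h0 (Or.inl rfl)
  have hs0 : s = 0 := by
    by_contra h0
    exact hge s hs h0 (Or.inr (Or.inr (Or.inl rfl)))
  constructor
  · rw [hz i, ← hrdef, hr0, pow_zero]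
  · rw [hz j, ← hsdef, hs0, pow_zero]
end

section
/- For a prime p and ζ = exp(2πi/p), the quantity a_1 := (1/(p−1))·Σ_{j=1}^{p−1} 1/((1−ζ^j)(1−ζ^j)) equals (5−p)/12. -/
open Complex Finset

private lemma sum_cast_range (n : ℕ) : ∑ k ∈ Finset.range n, (k : ℂ) = n * (n - 1) / 2 := by
  induction n with
  | zero => simp
  | succ n ih =>
    rw [Finset.sum_range_succ, ih]
    push_cast
    ring

private lemma sum_sq_cast_range (n : ℕ) :
    ∑ k ∈ Finset.range n, (k : ℂ) ^ 2 = n * (n - 1) * (2 * n - 1) / 6 := by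
  induction n with
  | zero => simp
  | succ n ih =>
    rw [Finset.sum_range_succ, ih]
    push_cast
    ring

/-- For a prime `p` and `ζ = exp(2πi/p)`,
`(1/(p-1)) · Σ_{j=1}^{p-1} 1/((1-ζ^j)(1-ζ^j)) = (5-p)/12`. -/
theorem lefschetz_coefficient_a_one (p : ℕ) (hp : p.Prime)
    (ζ : ℂ) (hζ : ζ = Complex.exp (2 * Real.pi * Complex.I / p)) :
    (1 / ((p : ℂ) - 1)) * ∑ j ∈ Finset.Icc 1 (p - 1), 1 / ((1 - ζ ^ j) * (1 - ζ ^ j)) =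
      ((5 : ℂ) - p) / 12 := by
  have hp2 : 2 ≤ p := hp.two_le
  have hprim : IsPrimitiveRoot ζ p := by
    rw [hζ]; exact Complex.isPrimitiveRoot_exp p hp.ne_zero
  have hζp : ζ ^ p = 1 := hprim.pow_eq_one
  have hpC : (p : ℂ) ≠ 0 := Nat.cast_ne_zero.2 hp.ne_zero
  have hp1 : (p : ℂ) - 1 ≠ 0 := by
    rw [sub_ne_zero]
    intro h
    have : p = 1 := by exact_mod_cast h
    omega
  set E := (Finset.range p).erase 0 with hE
  have hset : Finset.Icc 1 (p - 1) = E := by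
    ext j
    simp only [hE, Finset.mem_Icc, Finset.mem_erase, Finset.mem_range]
    omega
  set c : ℕ → ℂ := fun j => ∑ k ∈ Finset.range p, (k : ℂ) * ζ ^ (j * k) with hc
  -- key identity : (1 - ζ^j) * c j = -p for j ∈ E
  have key : ∀ j ∈ E, (1 - ζ ^ j) * c j = -p := by
    intro j hj
    simp only [hE, Finset.mem_erase, Finset.mem_range] at hj
    obtain ⟨hj0, hjp⟩ := hj
    have hωp : (ζ ^ j) ^ p = 1 := by rw [← pow_mul, mul_comm, pow_mul, hζp, one_pow]
    have hω1 : ζ ^ j ≠ 1 := hprim.pow_ne_one_of_pos_of_lt hj0 hjp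
    have hgeom : ∑ k ∈ Finset.range p, (ζ ^ j) ^ k = 0 := by
      rw [geom_sum_eq hω1, hωp, sub_self, zero_div]
    rw [hc, Finset.mul_sum]
    calc ∑ k ∈ Finset.range p, (1 - ζ ^ j) * ((k : ℂ) * ζ ^ (j * k))
        = ∑ k ∈ Finset.range p,
            (((k : ℂ) * (ζ ^ j) ^ k - ((k + 1 : ℕ) : ℂ) * (ζ ^ j) ^ (k + 1))
              + (ζ ^ j) ^ (k + 1)) := by
          refine Finset.sum_congr rfl fun k _ => ?_
          rw [mul_comm j k, pow_mul]
          push_cast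
          ring
      _ = (((0 : ℕ) : ℂ) * (ζ ^ j) ^ 0 - ((p : ℕ) : ℂ) * (ζ ^ j) ^ p)
            + (ζ ^ j) * ∑ k ∈ Finset.range p, (ζ ^ j) ^ k := by
          rw [Finset.sum_add_distrib,
            Finset.sum_range_sub' (fun k => ((k : ℕ) : ℂ) * (ζ ^ j) ^ k) p]
          congr 1
          rw [Finset.mul_sum]
          exact Finset.sum_congr rfl fun k _ => by rw [pow_succ]; ring
      _ = -p := by rw [hωp, hgeom]; simp
  have hinv : ∀ j ∈ E, 1 / ((1 - ζ ^ j) * (1 - ζ ^ j)) = (c j * c j) / ((p : ℂ) * p) := by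
    intro j hj
    have h1 := key j hj
    have h2 : ((1 - ζ ^ j) * (1 - ζ ^ j)) * (c j * c j) = (p : ℂ) * p := by
      calc ((1 - ζ ^ j) * (1 - ζ ^ j)) * (c j * c j)
          = ((1 - ζ ^ j) * c j) * ((1 - ζ ^ j) * c j) := by ring
        _ = (-(p : ℂ)) * (-(p : ℂ)) := by rw [h1]
        _ = (p : ℂ) * p := by ring
    have hne : (1 - ζ ^ j) * (1 - ζ ^ j) ≠ 0 := by
      intro h
      rw [h, zero_mul] at h2
      exact hpC (by rcases mul_eq_zero.mp h2.symm with h' | h' <;> exact h')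
    rw [div_eq_div_iff hne (mul_ne_zero hpC hpC), one_mul]
    linear_combination -h2
  have hG : ∀ m : ℕ, ∑ j ∈ Finset.range p, ζ ^ (j * m) = if p ∣ m then (p : ℂ) else 0 := by
    intro m
    have hrw : ∀ j, ζ ^ (j * m) = (ζ ^ m) ^ j := fun j => by rw [← pow_mul, mul_comm]
    simp_rw [hrw]
    by_cases hd : p ∣ m
    · rw [if_pos hd]
      have : ζ ^ m = 1 := (hprim.pow_eq_one_iff_dvd m).mpr hd
      simp [this]
    · rw [if_neg hd]
      have hne1 : ζ ^ m ≠ 1 := fun h => hd ((hprim.pow_eq_one_iff_dvd m).mp h)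
      have hmp : (ζ ^ m) ^ p = 1 := by rw [← pow_mul, mul_comm, pow_mul, hζp, one_pow]
      rw [geom_sum_eq hne1, hmp, sub_self, zero_div]
  have hGE : ∀ m : ℕ, ∑ j ∈ E, ζ ^ (j * m) = (if p ∣ m then (p : ℂ) else 0) - 1 := by
    intro m
    have h0 : (0 : ℕ) ∈ Finset.range p := by simp; omega
    rw [hE, Finset.sum_erase_eq_sub h0, hG m]
    simp
  -- expand c j * c j and sum over j
  have hcc : ∑ j ∈ E, (c j * c j) =
      ∑ k ∈ Finset.range p, ∑ l ∈ Finset.range p,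
        (k : ℂ) * (l : ℂ) * ((if p ∣ (k + l) then (p : ℂ) else 0) - 1) := by
    have expand : ∀ j, c j * c j =
        ∑ k ∈ Finset.range p, ∑ l ∈ Finset.range p, (k : ℂ) * (l : ℂ) * ζ ^ (j * (k + l)) := by
      intro j
      rw [hc]
      rw [Finset.sum_mul_sum]
      refine Finset.sum_congr rfl fun k _ => Finset.sum_congr rfl fun l _ => ?_
      rw [Nat.mul_add, pow_add]
      ring
    calc ∑ j ∈ E, (c j * c j)
        = ∑ j ∈ E, ∑ k ∈ Finset.range p, ∑ l ∈ Finset.range p,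
            (k : ℂ) * (l : ℂ) * ζ ^ (j * (k + l)) :=
          Finset.sum_congr rfl fun j _ => expand j
      _ = ∑ k ∈ Finset.range p, ∑ l ∈ Finset.range p, ∑ j ∈ E,
            (k : ℂ) * (l : ℂ) * ζ ^ (j * (k + l)) := by
          rw [Finset.sum_comm]
          exact Finset.sum_congr rfl fun k _ => Finset.sum_comm
      _ = ∑ k ∈ Finset.range p, ∑ l ∈ Finset.range p,
            (k : ℂ) * (l : ℂ) * ((if p ∣ (k + l) then (p : ℂ) else 0) - 1) := by
          refine Finset.sum_congr rfl fun k _ => Finset.sum_congr rfl fun l _ => ?_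
          rw [← Finset.mul_sum, hGE]
  -- evaluate the double sum
  have hrow : ∀ k ∈ Finset.range p,
      ∑ l ∈ Finset.range p, (k : ℂ) * (l : ℂ) * (if p ∣ (k + l) then (p : ℂ) else 0)
        = (k : ℂ) * ((p : ℂ) - (k : ℂ)) * (p : ℂ) := by
    intro k hk
    rw [Finset.mem_range] at hk
    rcases Nat.eq_zero_or_pos k with hk0 | hk1
    · subst hk0; simp
    · have hmem : p - k ∈ Finset.range p := by rw [Finset.mem_range]; omega
      rw [Finset.sum_eq_single_of_mem (p - k) hmem ?_]
      · have hdvd : p ∣ (k + (p - k)) := by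
          have h : k + (p - k) = p := by omega
          rw [h]
        rw [if_pos hdvd, Nat.cast_sub hk.le]
      · intro l hl hlne
        rw [Finset.mem_range] at hl
        have hnd : ¬ p ∣ (k + l) := by
          intro hd
          have h1 : p ≤ k + l := Nat.le_of_dvd (by omega) hd
          have h3 : p ∣ (k + l - p) := Nat.dvd_sub hd dvd_rfl
          have h4 : k + l - p = 0 := Nat.eq_zero_of_dvd_of_lt h3 (by omega)
          omega
        rw [if_neg hnd, mul_zero]
  set Q : ℂ := ∑ k ∈ Finset.range p, (k : ℂ) with hQ
  set R : ℂ := ∑ k ∈ Finset.range p, (k : ℂ) ^ 2 with hR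
  have htotal : ∑ j ∈ E, (c j * c j) = ((p : ℂ) ^ 2 * Q - p * R) - Q * Q := by
    rw [hcc]
    have step1 : ∀ k ∈ Finset.range p,
        ∑ l ∈ Finset.range p, (k : ℂ) * (l : ℂ) * ((if p ∣ (k + l) then (p : ℂ) else 0) - 1)
          = (k : ℂ) * ((p : ℂ) - (k : ℂ)) * (p : ℂ) - (k : ℂ) * Q := by
      intro k hk
      have : ∀ l : ℕ, (k : ℂ) * (l : ℂ) * ((if p ∣ (k + l) then (p : ℂ) else 0) - 1)
          = (k : ℂ) * (l : ℂ) * (if p ∣ (k + l) then (p : ℂ) else 0) - (k : ℂ) * (l : ℂ) := by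
        intro l; ring
      simp_rw [this]
      rw [Finset.sum_sub_distrib, hrow k hk, ← Finset.mul_sum, hQ]
    rw [Finset.sum_congr rfl step1, Finset.sum_sub_distrib]
    have e1 : ∑ k ∈ Finset.range p, (k : ℂ) * ((p : ℂ) - (k : ℂ)) * (p : ℂ)
        = (p : ℂ) ^ 2 * Q - p * R := by
      have : ∀ k : ℕ, (k : ℂ) * ((p : ℂ) - (k : ℂ)) * (p : ℂ)
          = (p : ℂ) ^ 2 * (k : ℂ) - (p : ℂ) * (k : ℂ) ^ 2 := fun k => by ring
      simp_rw [this]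
      rw [Finset.sum_sub_distrib, ← Finset.mul_sum, ← Finset.mul_sum, hQ, hR]
    have e2 : ∑ k ∈ Finset.range p, (k : ℂ) * Q = Q * Q := by
      rw [← Finset.sum_mul]
    rw [e1, e2]
  -- put everything together
  rw [hset, Finset.sum_congr rfl hinv, ← Finset.sum_div, htotal, hQ, hR,
    sum_cast_range, sum_sq_cast_range]
  field_simp
  ring
end
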